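/- Let B be a square matrix and A_H = I \otimes I - \Delta \otimes B the block lower bidiagonal matrix with identity diagonal blocks and -B subdiagonal blocks, of block size T+1. If B admits a unit eigenvector \xi with eigenvalue e^{i\theta} for some real \theta, then \|A_H^{-1}\| \geq \sqrt{(2+T)(3+2T)/6} \geq T/\sqrt{3}. Consequently, if additionally \|A_H\| \geq \sqrt{1+\|B\|^2}, the condition number satisfies \kappa(A_H) = \|A_H\| \|A_H^{-1}\| \geq \|B\| T / \sqrt{3}. -/

import Mathlib

open Kronecker

/-- The spectral (operator) norm of a complex matrix. -/
noncomputable def opNorm {m n : Type*} [Fintype m] [Fintype n] [DecidableEq n]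
    (M : Matrix m n ℂ) : ℝ :=
  ‖LinearMap.toContinuousLinearMap (Matrix.toEuclideanLin M)‖

lemma sumsq (m : ℕ) : ∑ r ∈ Finset.range m, ((r : ℝ) + 1) ^ 2
    = (m : ℝ) * (m + 1) * (2 * m + 1) / 6 := by
  induction m with
  | zero => simp
  | succ k ih =>
    rw [Finset.sum_range_succ, ih]
    push_cast
    field_simp
    ring

lemma shift_pow {T : ℕ} (k : ℕ) (r c : Fin (T + 1)) :
    (((Matrix.of fun r c : Fin (T + 1) => if (r : ℕ) = (c : ℕ) + 1 then (1 : ℂ) else 0)) ^ k) r c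
      = if (r : ℕ) = (c : ℕ) + k then 1 else 0 := by
  induction k generalizing c with
  | zero => simp [Matrix.one_apply, Fin.ext_iff]
  | succ k ih =>
    rw [pow_succ, Matrix.mul_apply]
    simp only [Matrix.of_apply]
    by_cases h : (c : ℕ) + 1 ≤ T
    · rw [Finset.sum_eq_single (⟨(c : ℕ) + 1, by omega⟩ : Fin (T + 1))]
      · rw [ih]
        simp only [Fin.ext_iff]
        norm_num [add_assoc]
        split <;> split <;> first | rfl | omega
      · intro j _ hne
        have : ¬ ((j : ℕ) = (c : ℕ) + 1) := fun hh => hne (Fin.ext hh)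
        simp [this]
      · intro hmem; exact absurd (Finset.mem_univ _) hmem
    · push_neg at h
      have h1 : ∀ j : Fin (T + 1), ¬ ((j : ℕ) = (c : ℕ) + 1) := fun j => by
        have := j.isLt; omega
      have h2 : ¬ ((r : ℕ) = (c : ℕ) + (k + 1)) := by have := r.isLt; omega
      simp [h1, h2]

lemma kron_pow {m p : ℕ} (A : Matrix (Fin m) (Fin m) ℂ) (B : Matrix (Fin p) (Fin p) ℂ) (k : ℕ) :
    (A ⊗ₖ B) ^ k = (A ^ k) ⊗ₖ (B ^ k) := by
  induction k with
  | zero => simp [Matrix.one_kronecker_one]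
  | succ k ih => rw [pow_succ, pow_succ, pow_succ, ih, Matrix.mul_kronecker_mul]

/-- **Lower bound on the condition number of `A_H`.** Let `A_H = I ⊗ I - Δ ⊗ B` with `Δ` the
lower shift on `ℂ^(T+1)`. If `B` has a unit eigenvector `ξ` with eigenvalue `e^{iθ}`, then
`‖A_H⁻¹‖ ≥ √((2+T)(3+2T)/6) ≥ T/√3`, and if moreover `‖A_H‖ ≥ √(1+‖B‖²)` then
`κ(A_H) = ‖A_H‖·‖A_H⁻¹‖ ≥ ‖B‖·T/√3`. -/
theorem condition_number_lower_bound (n T : ℕ) (B : Matrix (Fin n) (Fin n) ℂ)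
    (Δ : Matrix (Fin (T + 1)) (Fin (T + 1)) ℂ)
    (hΔ : Δ = Matrix.of fun r c : Fin (T + 1) => if (r : ℕ) = (c : ℕ) + 1 then (1 : ℂ) else 0)
    (AH : Matrix (Fin (T + 1) × Fin n) (Fin (T + 1) × Fin n) ℂ)
    (hAH : AH = 1 - Δ ⊗ₖ B)
    (θ : ℝ) (ξ : Fin n → ℂ) (hξ : ∑ i, ‖ξ i‖ ^ 2 = 1)
    (heig : B.mulVec ξ = Complex.exp (θ * Complex.I) • ξ) :
    Real.sqrt ((2 + T) * (3 + 2 * T) / 6) ≤ opNorm AH⁻¹ ∧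
      (T : ℝ) / Real.sqrt 3 ≤ Real.sqrt ((2 + T) * (3 + 2 * T) / 6) ∧
      (Real.sqrt (1 + opNorm B ^ 2) ≤ opNorm AH →
        opNorm B * T / Real.sqrt 3 ≤ opNorm AH * opNorm AH⁻¹) := by
  -- invertibility of AH
  have hΔpow : Δ ^ (T + 1) = 0 := by
    ext r c
    rw [hΔ, shift_pow]
    have : ¬ ((r : ℕ) = (c : ℕ) + (T + 1)) := by have := r.isLt; omega
    simp [this]
  have hnil : IsNilpotent (Δ ⊗ₖ B) :=
    ⟨T + 1, by rw [kron_pow, hΔpow, Matrix.zero_kronecker]⟩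
  have hU : IsUnit AH := by rw [hAH]; exact hnil.isUnit_one_sub
  have hdet : IsUnit AH.det := (Matrix.isUnit_iff_isUnit_det AH).mp hU
  have hinv : AH⁻¹ * AH = 1 := Matrix.nonsing_inv_mul AH hdet
  -- the test vectors
  set E : ℕ → ℂ := fun t => Complex.exp ((θ * t : ℝ) * Complex.I) with hE
  set xf : Fin (T + 1) × Fin n → ℂ := fun p => E p.1 * ξ p.2 with hxf
  set yf : Fin (T + 1) × Fin n → ℂ := fun p => ((p.1 : ℕ) + 1 : ℂ) * E p.1 * ξ p.2 with hyf
  have hEabs : ∀ t : ℕ, ‖E t‖ = 1 := fun t => Complex.norm_exp_ofReal_mul_I _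
  have hEsucc : ∀ t : ℕ, E t * Complex.exp (θ * Complex.I) = E (t + 1) := by
    intro t
    rw [hE, ← Complex.exp_add]
    congr 1
    push_cast
    ring
  have hrow : ∀ i, ∀ s : Fin (T + 1), ∑ j, B i j * yf (s, j)
      = ((s : ℕ) + 1 : ℂ) * E ((s : ℕ) + 1) * ξ i := by
    intro i s
    have h1 : ∑ j, B i j * yf (s, j) = ((s : ℕ) + 1 : ℂ) * E (s : ℕ) * ∑ j, B i j * ξ j := by
      rw [Finset.mul_sum]
      exact Finset.sum_congr rfl fun j _ => by simp [hyf]; ring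
    have hBv : ∑ j, B i j * ξ j = Complex.exp (θ * Complex.I) * ξ i := by
      have := congrFun heig i
      simpa [Matrix.mulVec, dotProduct] using this
    rw [h1, hBv, ← hEsucc]
    ring
  have hmv : AH.mulVec yf = xf := by
    funext p
    obtain ⟨⟨tv, htv⟩, i⟩ := p
    rw [hAH, Matrix.sub_mulVec, Pi.sub_apply, Matrix.one_mulVec]
    have hk : ((Δ ⊗ₖ B).mulVec yf) (⟨tv, htv⟩, i)
        = ∑ s : Fin (T + 1), (if tv = (s : ℕ) + 1 then (1 : ℂ) else 0)
            * (((s : ℕ) + 1 : ℂ) * E ((s : ℕ) + 1) * ξ i) := by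
      show ∑ q : Fin (T + 1) × Fin n, (Δ ⊗ₖ B) (⟨tv, htv⟩, i) q * yf q = _
      rw [Fintype.sum_prod_type]
      refine Finset.sum_congr rfl fun s _ => ?_
      calc ∑ j, (Δ ⊗ₖ B) (⟨tv, htv⟩, i) (s, j) * yf (s, j)
          = Δ ⟨tv, htv⟩ s * ∑ j, B i j * yf (s, j) := by
            rw [Finset.mul_sum]
            exact Finset.sum_congr rfl fun j _ => by
              rw [Matrix.kroneckerMap_apply]; ring
        _ = _ := by rw [hrow i s, hΔ]; rfl
    rw [hk]
    cases tv with
    | zero =>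
      have hz : ∀ s : Fin (T + 1), (if 0 = (s : ℕ) + 1 then (1 : ℂ) else 0) = 0 := fun s => by
        simp
      simp only [hz, zero_mul, Finset.sum_const_zero, sub_zero]
      simp [hyf, hxf]
    | succ v =>
      have hvT : v < T + 1 := by omega
      rw [Finset.sum_eq_single (⟨v, hvT⟩ : Fin (T + 1))]
      · simp only [hyf, hxf, if_pos rfl, one_mul]
        push_cast
        ring
      · intro s _ hne
        have hsv : ¬ (v + 1 = (s : ℕ) + 1) := by
          intro hh
          apply hne
          apply Fin.ext
          simp only [Fin.val_mk]
          omega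
        simp [hsv, show ¬ (v = (s : ℕ)) by omega]
      · intro hmem; exact absurd (Finset.mem_univ _) hmem
  have h2 : AH⁻¹.mulVec xf = yf := by
    rw [← hmv, Matrix.mulVec_mulVec, hinv, Matrix.one_mulVec]
  -- norms
  set x : EuclideanSpace ℂ (Fin (T + 1) × Fin n) := (WithLp.equiv 2 _).symm xf with hx
  set y : EuclideanSpace ℂ (Fin (T + 1) × Fin n) := (WithLp.equiv 2 _).symm yf with hy
  have hxnorm : ‖x‖ = Real.sqrt (T + 1) := by
    rw [EuclideanSpace.norm_eq]
    congr 1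
    calc ∑ p : Fin (T + 1) × Fin n, ‖x p‖ ^ 2
        = ∑ t : Fin (T + 1), ∑ i, ‖ξ i‖ ^ 2 := by
          rw [Fintype.sum_prod_type]
          refine Finset.sum_congr rfl fun t _ => Finset.sum_congr rfl fun i _ => ?_
          simp [hx, hxf, WithLp.equiv_symm_apply, PiLp.toLp_apply, norm_mul,
            hEabs, mul_pow]
      _ = (T + 1 : ℝ) := by simp [hξ]
  have hynorm : ‖y‖ = Real.sqrt ((T + 1) * ((2 + T) * (3 + 2 * T) / 6)) := by
    rw [EuclideanSpace.norm_eq]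
    congr 1
    calc ∑ p : Fin (T + 1) × Fin n, ‖y p‖ ^ 2
        = ∑ t : Fin (T + 1), ∑ i, ((t : ℝ) + 1) ^ 2 * ‖ξ i‖ ^ 2 := by
          rw [Fintype.sum_prod_type]
          refine Finset.sum_congr rfl fun t _ => Finset.sum_congr rfl fun i _ => ?_
          have habs : ‖y (t, i)‖ = ((t : ℝ) + 1) * ‖ξ i‖ := by
            have hyv : y (t, i) = ((t : ℕ) + 1 : ℂ) * E t * ξ i := rfl
            rw [hyv, norm_mul, norm_mul, hEabs, mul_one]
            congr 1
            rw [show ((t : ℕ) + 1 : ℂ) = (((t : ℕ) + 1 : ℕ) : ℂ) by push_cast; ring,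
              RCLike.norm_natCast]
            push_cast
            ring
          rw [habs, mul_pow]
      _ = ∑ t : Fin (T + 1), ((t : ℝ) + 1) ^ 2 := by
          refine Finset.sum_congr rfl fun t _ => ?_
          rw [← Finset.mul_sum, hξ, mul_one]
      _ = (T + 1 : ℝ) * ((2 + T) * (3 + 2 * T) / 6) := by
          rw [Fin.sum_univ_eq_sum_range (fun t => ((t : ℝ) + 1) ^ 2), sumsq]
          push_cast
          ring
  have happ : (LinearMap.toContinuousLinearMap (Matrix.toEuclideanLin AH⁻¹)) x = y := by
    show Matrix.toEuclideanLin AH⁻¹ x = y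
    rw [hx, WithLp.equiv_symm_apply, Matrix.toEuclideanLin_apply_piLp_toLp, h2, hy, WithLp.equiv_symm_apply]
  have key : ‖y‖ ≤ opNorm AH⁻¹ * ‖x‖ := by
    rw [← happ]; exact ContinuousLinearMap.le_opNorm _ x
  have hTpos : (0 : ℝ) < Real.sqrt (T + 1) := Real.sqrt_pos.mpr (by positivity)
  have part1 : Real.sqrt ((2 + T) * (3 + 2 * T) / 6) ≤ opNorm AH⁻¹ := by
    rw [hxnorm, hynorm, Real.sqrt_mul (by positivity)] at key
    have := (mul_le_mul_iff_of_pos_right hTpos).mp (by linarith : Real.sqrt ((2 + T) * (3 + 2 * T) / 6)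
      * Real.sqrt (T + 1) ≤ opNorm AH⁻¹ * Real.sqrt (T + 1))
    exact this
  have part2 : (T : ℝ) / Real.sqrt 3 ≤ Real.sqrt ((2 + T) * (3 + 2 * T) / 6) := by
    rw [Real.le_sqrt (by positivity) (by positivity), div_pow, Real.sq_sqrt (by norm_num),
      div_le_div_iff₀ (by norm_num) (by norm_num)]
    have : (0 : ℝ) ≤ (T : ℝ) := Nat.cast_nonneg T
    nlinarith
  refine ⟨part1, part2, fun hA => ?_⟩
  have hBnn : (0 : ℝ) ≤ opNorm B := norm_nonneg _
  have hB : opNorm B ≤ opNorm AH := by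
    refine le_trans ?_ hA
    rw [Real.le_sqrt hBnn (by positivity)]
    nlinarith
  have hT : (T : ℝ) / Real.sqrt 3 ≤ opNorm AH⁻¹ := part2.trans part1
  rw [mul_div_assoc]
  exact mul_le_mul hB hT (by positivity) (le_trans hBnn hB)
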